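/- At every point of U, y satisfies the decoupled Riccati equation along forward characteristics: y_t + c·y_x = a₀ + a₂·y², where a₂ < 0 (Theorem 1.2, equation for y; when m is constant this reduces to Lax's equation y′ = a₂·y² for the p-system). -/

import Mathlib

open Real

/-- Partial derivative with respect to `t` (the first coordinate). -/
noncomputable def pdt (f : ℝ × ℝ → ℝ) (pt : ℝ × ℝ) : ℝ := fderiv ℝ f pt (1, 0)

/-- Partial derivative with respect to `x` (the second coordinate). -/
noncomputable def pdx (f : ℝ × ℝ → ℝ) (pt : ℝ × ℝ) : ℝ := fderiv ℝ f pt (0, 1)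

def HasPD (f : ℝ × ℝ → ℝ) (x : ℝ × ℝ) (dt dx : ℝ) : Prop :=
  ∃ L : ℝ × ℝ →L[ℝ] ℝ, HasFDerivAt f L x ∧ L (1,0) = dt ∧ L (0,1) = dx

theorem HasPD.pdt' {f x dt dx} (h : HasPD f x dt dx) : pdt f x = dt := by
  obtain ⟨L, hL, h1, _⟩ := h
  show fderiv ℝ f x (1,0) = dt
  rw [hL.fderiv]; exact h1

theorem HasPD.pdx' {f x dt dx} (h : HasPD f x dt dx) : pdx f x = dx := by
  obtain ⟨L, hL, _, h2⟩ := h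
  show fderiv ℝ f x (0,1) = dx
  rw [hL.fderiv]; exact h2

theorem hasPD_self {f x} (h : DifferentiableAt ℝ f x) : HasPD f x (pdt f x) (pdx f x) :=
  ⟨fderiv ℝ f x, h.hasFDerivAt, rfl, rfl⟩

theorem hasPD_const (c : ℝ) (x : ℝ × ℝ) : HasPD (fun _ => c) x 0 0 :=
  ⟨0, hasFDerivAt_const c x, by simp, by simp⟩

theorem HasPD.add {f g x a b a' b'} (hf : HasPD f x a b) (hg : HasPD g x a' b') :
    HasPD (fun q => f q + g q) x (a + a') (b + b') := by
  obtain ⟨L, hL, h1, h2⟩ := hf; obtain ⟨L', hL', h1', h2'⟩ := hg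
  exact ⟨L + L', hL.add hL', by simp [h1, h1'], by simp [h2, h2']⟩

theorem HasPD.neg {f x a b} (hf : HasPD f x a b) :
    HasPD (fun q => -(f q)) x (-a) (-b) := by
  obtain ⟨L, hL, h1, h2⟩ := hf
  exact ⟨-L, hL.neg, by simp [h1], by simp [h2]⟩

theorem HasPD.mul {f g : ℝ × ℝ → ℝ} {x a b a' b'} (hf : HasPD f x a b) (hg : HasPD g x a' b') :
    HasPD (fun q => f q * g q) x (a * g x + f x * a') (b * g x + f x * b') := by
  obtain ⟨L, hL, h1, h2⟩ := hf; obtain ⟨L', hL', h1', h2'⟩ := hg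
  refine ⟨f x • L' + g x • L, hL.mul hL', ?_, ?_⟩
  · simp only [ContinuousLinearMap.add_apply, ContinuousLinearMap.smul_apply, smul_eq_mul, h1, h1']
    ring
  · simp only [ContinuousLinearMap.add_apply, ContinuousLinearMap.smul_apply, smul_eq_mul, h2, h2']
    ring

theorem HasPD.rpow {f : ℝ × ℝ → ℝ} {x a b} (e : ℝ) (hf : HasPD f x a b) (h0 : f x ≠ 0) :
    HasPD (fun q => f q ^ e) x (e * f x ^ (e - 1) * a) (e * f x ^ (e - 1) * b) := by
  obtain ⟨L, hL, h1, h2⟩ := hf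
  refine ⟨(e * f x ^ (e - 1)) • L, hL.rpow_const (Or.inl h0), ?_, ?_⟩
  · simp [h1]
  · simp [h2]

theorem diff_pdx {f : ℝ × ℝ → ℝ} {x : ℝ × ℝ} (hf : ContDiffAt ℝ 2 f x) :
    DifferentiableAt ℝ (pdx f) x := by
  have h1 : DifferentiableAt ℝ (fderiv ℝ f) x :=
    (hf.fderiv_right (m := 1) (by norm_num)).differentiableAt (by norm_num)
  exact h1.clm_apply (differentiableAt_const _)

theorem pd_second {f : ℝ × ℝ → ℝ} {x : ℝ × ℝ} (hf : ContDiffAt ℝ 2 f x) (v w : ℝ × ℝ) :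
    fderiv ℝ (fun q => fderiv ℝ f q w) x v = fderiv ℝ (fderiv ℝ f) x v w := by
  have h1 : DifferentiableAt ℝ (fderiv ℝ f) x :=
    (hf.fderiv_right (m := 1) (by norm_num)).differentiableAt (by norm_num)
  have H := h1.hasFDerivAt.clm_apply (hasFDerivAt_const w x)
  rw [H.fderiv]
  simp

theorem pdtx_symm {f : ℝ × ℝ → ℝ} {x : ℝ × ℝ} (hf : ContDiffAt ℝ 2 f x) :
    pdt (pdx f) x = pdx (pdt f) x := by
  have hs : IsSymmSndFDerivAt ℝ f x := hf.isSymmSndFDerivAt (by norm_num)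
  show fderiv ℝ (fun q => fderiv ℝ f q (0,1)) x (1,0)
     = fderiv ℝ (fun q => fderiv ℝ f q (1,0)) x (0,1)
  rw [pd_second hf, pd_second hf, hs (1,0) (0,1)]

set_option maxHeartbeats 4000000 in
/-- Theorem 1.2, equation for `y`: `y′ = a₀ + a₂·y²` with `a₂ < 0` on `U`. -/
theorem stmt_9
    (γ Kc : ℝ) (hγ : 1 < γ) (hKc : 0 < Kc)
    (U : Set (ℝ × ℝ)) (hU : IsOpen U)
    (u z m : ℝ × ℝ → ℝ)
    (hu : ContDiffOn ℝ 2 u U) (hz : ContDiffOn ℝ 2 z U) (hm : ContDiffOn ℝ 2 m U)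
    (hzpos : ∀ pt ∈ U, 0 < z pt) (hmpos : ∀ pt ∈ U, 0 < m pt)
    (c p : ℝ × ℝ → ℝ)
    (hc : c = fun pt => Kc * m pt * z pt ^ ((γ + 1) / (γ - 1)))
    (hp : p = fun pt => ((γ - 1) / (2 * γ) * Kc) * (m pt) ^ 2 * z pt ^ (2 * γ / (γ - 1)))
    (heq1 : ∀ pt ∈ U, pdt z pt + (c pt / m pt) * pdx u pt = 0)
    (heq2 : ∀ pt ∈ U, pdt u pt + m pt * c pt * pdx z pt + 2 * (p pt / m pt) * pdx m pt = 0)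
    (heq3 : ∀ pt ∈ U, pdt m pt = 0)
    (α β : ℝ × ℝ → ℝ)
    (hα : α = fun pt => pdx u pt + m pt * pdx z pt + ((γ - 1) / γ) * pdx m pt * z pt)
    (hβ : β = fun pt => pdx u pt - m pt * pdx z pt - ((γ - 1) / γ) * pdx m pt * z pt)
    (yt qt : ℝ × ℝ → ℝ)
    (hyt : yt = fun pt => z pt ^ ((γ + 1) / (2 * (γ - 1))) * α pt
      + ((γ - 1) / (γ * (3 * γ - 1))) * z pt ^ ((γ + 1) / (2 * (γ - 1)) + 1) * pdx m pt)
    (hqt : qt = fun pt => z pt ^ ((γ + 1) / (2 * (γ - 1))) * β pt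
      - ((γ - 1) / (γ * (3 * γ - 1))) * z pt ^ ((γ + 1) / (2 * (γ - 1)) + 1) * pdx m pt)
    (a0t : ℝ × ℝ → ℝ)
    (ha0t : a0t = fun pt => (Kc / γ) * (((γ - 1) / (3 * γ - 1)) * m pt * pdx (pdx m) pt
      - ((3 * γ + 1) * (γ - 1) / (3 * γ - 1) ^ 2) * (pdx m pt) ^ 2)
      * z pt ^ (3 * (γ + 1) / (2 * (γ - 1)) + 1))
    (a2t : ℝ × ℝ → ℝ)
    (ha2t : a2t = fun pt => -Kc * ((γ + 1) / (2 * (γ - 1))) * z pt ^ ((γ + 1) / (2 * (γ - 1)) - 1))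
    (yf qf : ℝ × ℝ → ℝ)
    (hyf : yf = fun pt => m pt ^ (-(3 * (3 - γ)) / (2 * (3 * γ - 1))) * yt pt)
    (hqf : qf = fun pt => m pt ^ (-(3 * (3 - γ)) / (2 * (3 * γ - 1))) * qt pt)
    (a0 a2 : ℝ × ℝ → ℝ)
    (ha0 : a0 = fun pt => m pt ^ (-(3 * (3 - γ)) / (2 * (3 * γ - 1))) * a0t pt)
    (ha2 : a2 = fun pt => m pt ^ (3 * (3 - γ) / (2 * (3 * γ - 1))) * a2t pt)
 :
    ∀ pt ∈ U,
      pdt yf pt + c pt * pdx yf pt = a0 pt + a2 pt * (yf pt) ^ 2 ∧ a2 pt < 0 := by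
  intro pt hpt
  have hmem : U ∈ nhds pt := hU.mem_nhds hpt
  have hcu : ContDiffAt ℝ 2 u pt := hu.contDiffAt hmem
  have hcz : ContDiffAt ℝ 2 z pt := hz.contDiffAt hmem
  have hcm : ContDiffAt ℝ 2 m pt := hm.contDiffAt hmem
  have hZ : 0 < z pt := hzpos pt hpt
  have hM : 0 < m pt := hmpos pt hpt
  have hZne : z pt ≠ 0 := hZ.ne'
  have hMne : m pt ≠ 0 := hM.ne'
  have dz : DifferentiableAt ℝ z pt := hcz.differentiableAt (by norm_num)
  have dm : DifferentiableAt ℝ m pt := hcm.differentiableAt (by norm_num)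
  have Az : HasPD z pt (pdt z pt) (pdx z pt) := hasPD_self dz
  have Am : HasPD m pt (pdt m pt) (pdx m pt) := hasPD_self dm
  have Apu : HasPD (pdx u) pt (pdt (pdx u) pt) (pdx (pdx u) pt) := hasPD_self (diff_pdx hcu)
  have Apz : HasPD (pdx z) pt (pdt (pdx z) pt) (pdx (pdx z) pt) := hasPD_self (diff_pdx hcz)
  have Apm : HasPD (pdx m) pt (pdt (pdx m) pt) (pdx (pdx m) pt) := hasPD_self (diff_pdx hcm)
  -- the main chain for yf
  have HY := HasPD.mul (HasPD.rpow (-(3 * (3 - γ)) / (2 * (3 * γ - 1))) Am hMne)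
    (HasPD.add
      (HasPD.mul (HasPD.rpow ((γ + 1) / (2 * (γ - 1))) Az hZne)
        (HasPD.add (HasPD.add Apu (HasPD.mul Am Apz))
          (HasPD.mul (HasPD.mul (hasPD_const ((γ - 1) / γ) pt) Apm) Az)))
      (HasPD.mul (HasPD.mul (hasPD_const ((γ - 1) / (γ * (3 * γ - 1))) pt)
          (HasPD.rpow ((γ + 1) / (2 * (γ - 1)) + 1) Az hZne)) Apm))
  constructor
  · simp only [hyf, hyt, hα, hc, ha0, ha0t, ha2, ha2t]
    rw [HY.pdt', HY.pdx']
    -- pointwise PDE facts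
    have hg1 : Set.EqOn (pdt z) (fun q => -(Kc * z q ^ ((γ + 1) / (γ - 1)) * pdx u q)) U := by
      intro q hq
      show pdt z q = -(Kc * z q ^ ((γ + 1) / (γ - 1)) * pdx u q)
      have hmq : m q ≠ 0 := (hmpos q hq).ne'
      have h1 : pdt z q = -(c q / m q * pdx u q) := by linarith [heq1 q hq]
      rw [hc] at h1
      rw [h1]
      field_simp
    have hg2 : Set.EqOn (pdt u)
        (fun q => -(Kc * (m q * m q) * z q ^ ((γ + 1) / (γ - 1)) * pdx z q
          + (γ - 1) / γ * Kc * (m q * (z q ^ (2 * γ / (γ - 1)) * pdx m q)))) U := by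
      intro q hq
      show pdt u q = -(Kc * (m q * m q) * z q ^ ((γ + 1) / (γ - 1)) * pdx z q
          + (γ - 1) / γ * Kc * (m q * (z q ^ (2 * γ / (γ - 1)) * pdx m q)))
      have hmq : m q ≠ 0 := (hmpos q hq).ne'
      have hγ0 : γ ≠ 0 := by linarith
      have h1 : pdt u q = -(m q * c q * pdx z q + 2 * (p q / m q) * pdx m q) := by
        linarith [heq2 q hq]
      rw [hc, hp] at h1
      rw [h1]
      field_simp
    have hg3 : Set.EqOn (pdt m) (fun _ => (0:ℝ)) U := fun q hq => heq3 q hq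
    have hzt : pdt z pt = -(Kc * z pt ^ ((γ + 1) / (γ - 1)) * pdx u pt) := hg1 hpt
    have hmt : pdt m pt = 0 := heq3 pt hpt
    have hmxt : pdt (pdx m) pt = 0 := by
      rw [pdtx_symm hcm]
      show fderiv ℝ (pdt m) pt (0,1) = 0
      rw [Filter.EventuallyEq.fderiv_eq (Filter.eventuallyEq_of_mem hmem hg3)]
      simp
    have hzxteq : pdt (pdx z) pt
        = pdx (fun q => -(Kc * z q ^ ((γ + 1) / (γ - 1)) * pdx u q)) pt := by
      rw [pdtx_symm hcz]
      show fderiv ℝ (pdt z) pt (0,1) = _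
      rw [Filter.EventuallyEq.fderiv_eq (Filter.eventuallyEq_of_mem hmem hg1)]
      rfl
    have huxteq : pdt (pdx u) pt
        = pdx (fun q => -(Kc * (m q * m q) * z q ^ ((γ + 1) / (γ - 1)) * pdx z q
          + (γ - 1) / γ * Kc * (m q * (z q ^ (2 * γ / (γ - 1)) * pdx m q)))) pt := by
      rw [pdtx_symm hcu]
      show fderiv ℝ (pdt u) pt (0,1) = _
      rw [Filter.EventuallyEq.fderiv_eq (Filter.eventuallyEq_of_mem hmem hg2)]
      rfl
    have HG1 := (((hasPD_const Kc pt).mul (Az.rpow ((γ + 1) / (γ - 1)) hZne)).mul Apu).neg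
    have HG2 := ((((hasPD_const Kc pt).mul (Am.mul Am)).mul
        (Az.rpow ((γ + 1) / (γ - 1)) hZne)).mul Apz).add
      (((hasPD_const ((γ - 1) / γ * Kc) pt)).mul
        (Am.mul ((Az.rpow (2 * γ / (γ - 1)) hZne).mul Apm))) |>.neg
    rw [hzxteq, HG1.pdx', huxteq, HG2.pdx', hzt, hmt, hmxt]
    have hγ1 : γ - 1 ≠ 0 := by linarith
    have hγ0 : γ ≠ 0 := by linarith
    have h3γ : 3 * γ - 1 ≠ 0 := by linarith
    have e1 : z pt ^ ((γ + 1) / (2 * (γ - 1)) + 1 - 1) = z pt ^ ((γ + 1) / (2 * (γ - 1))) := by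
      rw [show (γ + 1) / (2 * (γ - 1)) + 1 - 1 = (γ + 1) / (2 * (γ - 1)) by ring]
    have e4 : z pt ^ ((γ + 1) / (γ - 1))
        = z pt ^ ((γ + 1) / (2 * (γ - 1))) * z pt ^ ((γ + 1) / (2 * (γ - 1))) := by
      rw [← Real.rpow_add hZ]
      congr 1
      field_simp
      ring
    have e5 : z pt ^ ((γ + 1) / (γ - 1) - 1)
        = z pt ^ ((γ + 1) / (2 * (γ - 1))) * z pt ^ ((γ + 1) / (2 * (γ - 1))) / z pt := by
      rw [Real.rpow_sub hZ, Real.rpow_one, e4]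
    have e7 : z pt ^ (2 * γ / (γ - 1) - 1)
        = z pt ^ ((γ + 1) / (2 * (γ - 1))) * z pt ^ ((γ + 1) / (2 * (γ - 1))) := by
      rw [show 2 * γ / (γ - 1) - 1 = (γ + 1) / (γ - 1) by field_simp; ring, e4]
    have e3 : z pt ^ ((γ + 1) / (2 * (γ - 1)) - 1)
        = z pt ^ ((γ + 1) / (2 * (γ - 1))) / z pt := by
      rw [Real.rpow_sub hZ, Real.rpow_one]
    have f1 : m pt ^ (-(3 * (3 - γ)) / (2 * (3 * γ - 1)) - 1)
        = m pt ^ (-(3 * (3 - γ)) / (2 * (3 * γ - 1))) / m pt := by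
      rw [Real.rpow_sub hM, Real.rpow_one]
    have f2 : m pt ^ (3 * (3 - γ) / (2 * (3 * γ - 1)))
        = 1 / m pt ^ (-(3 * (3 - γ)) / (2 * (3 * γ - 1))) := by
      rw [show 3 * (3 - γ) / (2 * (3 * γ - 1)) = -(-(3 * (3 - γ)) / (2 * (3 * γ - 1))) by ring,
        Real.rpow_neg hM.le, one_div]
    have e2 : z pt ^ ((γ + 1) / (2 * (γ - 1)) + 1)
        = z pt ^ ((γ + 1) / (2 * (γ - 1))) * z pt := by
      rw [Real.rpow_add hZ, Real.rpow_one]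
    have e6 : z pt ^ (2 * γ / (γ - 1))
        = z pt ^ ((γ + 1) / (2 * (γ - 1))) * z pt ^ ((γ + 1) / (2 * (γ - 1))) * z pt := by
      rw [show 2 * γ / (γ - 1) = (γ + 1) / (γ - 1) + 1 by field_simp; ring,
        Real.rpow_add hZ, Real.rpow_one, e4]
    have e8 : z pt ^ (3 * (γ + 1) / (2 * (γ - 1)) + 1)
        = z pt ^ ((γ + 1) / (2 * (γ - 1))) * z pt ^ ((γ + 1) / (2 * (γ - 1)))
          * z pt ^ ((γ + 1) / (2 * (γ - 1))) * z pt := by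
      rw [show 3 * (γ + 1) / (2 * (γ - 1)) + 1
          = (γ + 1) / (2 * (γ - 1)) + (γ + 1) / (2 * (γ - 1)) + (γ + 1) / (2 * (γ - 1)) + 1 by ring,
        Real.rpow_add hZ, Real.rpow_add hZ, Real.rpow_add hZ, Real.rpow_one]
    rw [e1, e5, e7, e3, f1, f2, e2, e6, e8, e4]
    have hWne : z pt ^ ((γ + 1) / (2 * (γ - 1))) ≠ 0 := (rpow_pos_of_pos hZ _).ne'
    have hVne : m pt ^ (-(3 * (3 - γ)) / (2 * (3 * γ - 1))) ≠ 0 := (rpow_pos_of_pos hM _).ne'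
    field_simp
    ring
  · simp only [ha2, ha2t]
    have h1 : 0 < m pt ^ (3 * (3 - γ) / (2 * (3 * γ - 1))) := rpow_pos_of_pos hM _
    have h2 : 0 < z pt ^ ((γ + 1) / (2 * (γ - 1)) - 1) := rpow_pos_of_pos hZ _
    have h3 : 0 < (γ + 1) / (2 * (γ - 1)) := by
      apply div_pos <;> nlinarith
    have h4 : -Kc * ((γ + 1) / (2 * (γ - 1))) * z pt ^ ((γ + 1) / (2 * (γ - 1)) - 1) < 0 := by
      nlinarith [mul_pos (mul_pos hKc h3) h2]
    exact mul_neg_of_pos_of_neg h1 h4
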